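/- For every ε ∈ (0,1/4) and every q ∈ (0,1/2], δ_ε(q) ≥ q/5. -/

import Mathlib

/-- `δ_ε(q) = ∫₀¹ x^(1/q−1) · min((1−x)^(−1/2), ε^(−1/2)) dx − q(2−√ε)`. -/
noncomputable def deltaEps (ε q : ℝ) : ℝ :=
  (∫ x in (0:ℝ)..1, x ^ (1 / q - 1) * min ((1 - x) ^ (-(1:ℝ)/2)) (ε ^ (-(1:ℝ)/2)))
    - q * (2 - Real.sqrt ε)

set_option maxHeartbeats 1000000 in
/-- For every `ε ∈ (0,1/4)` and every `q ∈ (0,1/2]`, `δ_ε(q) ≥ q/5`. -/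
theorem deltaEps_ge_q_div_five (ε q : ℝ) (hε : ε ∈ Set.Ioo (0:ℝ) (1/4))
    (hq : q ∈ Set.Ioc (0:ℝ) (1/2)) :
    deltaEps ε q ≥ q / 5 := by
  obtain ⟨hε0, hε4⟩ := hε
  obtain ⟨hq0, hq2⟩ := hq
  set s := Real.sqrt ε with hsdef
  have hs0 : 0 < s := Real.sqrt_pos.2 hε0
  have hsq : s ^ 2 = ε := Real.sq_sqrt hε0.le
  have hs2 : s < 1/2 := by nlinarith
  have hε1 : ε < 1 := by nlinarith
  have hq1 : 2 ≤ 1/q := by rw [le_div_iff₀ hq0]; linarith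
  set g : ℝ → ℝ := fun x => (max (1-x) ε) ^ (-(1:ℝ)/2) with hgdef
  have hgc : Continuous g := by
    apply Continuous.rpow_const
    · exact (continuous_const.sub continuous_id).max continuous_const
    · intro x; left; positivity
  have hgmono : ∀ x y : ℝ, x ≤ y → g x ≤ g y := by
    intro x y hxy
    exact Real.rpow_le_rpow_of_nonpos (by positivity)
      (max_le_max (by linarith) le_rfl) (by norm_num)
  -- step 1 : replace min by g (a.e. on [0,1])
  have hcong : (∫ x in (0:ℝ)..1,
        x ^ (1/q - 1) * min ((1 - x) ^ (-(1:ℝ)/2)) (ε ^ (-(1:ℝ)/2)))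
      = ∫ x in (0:ℝ)..1, x ^ (1/q - 1) * g x := by
    apply intervalIntegral.integral_congr_ae
    have h1 : ∀ᵐ (x:ℝ), x ≠ (1:ℝ) := by
      rw [MeasureTheory.ae_iff]
      simpa using MeasureTheory.measure_singleton (1:ℝ)
    filter_upwards [h1] with x hne hx
    rw [Set.uIoc_of_le (by norm_num : (0:ℝ) ≤ 1)] at hx
    have hx1 : x < 1 := lt_of_le_of_ne hx.2 hne
    have h1x : 0 < 1 - x := by linarith
    congr 1
    show min ((1-x) ^ (-(1:ℝ)/2)) (ε ^ (-(1:ℝ)/2)) = (max (1-x) ε) ^ (-(1:ℝ)/2)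
    rcases le_total (1-x) ε with h | h
    · rw [max_eq_right h, min_eq_right]
      exact Real.rpow_le_rpow_of_nonpos h1x h (by norm_num)
    · rw [max_eq_left h, min_eq_left]
      exact Real.rpow_le_rpow_of_nonpos hε0 h (by norm_num)
  set r := 1/(2*q) with hrdef
  have hr1 : 1 ≤ r := by
    rw [hrdef, le_div_iff₀ (by linarith)]; linarith
  -- step 2 : substitution u = x^r reversed
  have hsub : (∫ x in (0:ℝ)..1, (r * x ^ (r-1)) • (2 * (x^r) * g (x^r)))
      = ∫ u in (0:ℝ)..1, 2*u*g u := by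
    have h := intervalIntegral.integral_comp_smul_deriv (f := fun y : ℝ => y ^ r)
      (f' := fun y : ℝ => r * y ^ (r-1)) (g := fun u => 2*u*g u) (a := 0) (b := 1)
      (fun x _ => by
        simpa [mul_comm] using Real.hasDerivAt_rpow_const (p := r) (x := x) (Or.inr hr1))
      (ContinuousOn.mul continuousOn_const
        (ContinuousOn.rpow_const continuousOn_id (fun x _ => Or.inr (by linarith))))
      ((continuous_const.mul continuous_id).mul hgc)
    simpa [Real.zero_rpow (by positivity : r ≠ 0), Real.one_rpow, Function.comp] using h
  have hint2 : (∫ x in (0:ℝ)..1, (r * x ^ (r-1)) • (2 * (x^r) * g (x^r)))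
      = (1/q) * ∫ x in (0:ℝ)..1, x ^ (1/q - 1) * g (x^r) := by
    rw [← intervalIntegral.integral_const_mul]
    apply intervalIntegral.integral_congr
    intro x hx
    rw [Set.uIcc_of_le (by norm_num : (0:ℝ) ≤ 1)] at hx
    have hxx : x ^ (r-1) * x ^ r = x ^ (1/q - 1) := by
      rw [← Real.rpow_add' hx.1 (by nlinarith : (r-1) + r ≠ 0)]
      congr 1
      rw [hrdef]; field_simp; ring
    have h2r : 1/q = 2*r := by rw [hrdef]; field_simp
    show (r * x ^ (r-1)) • (2 * (x^r) * g (x^r)) = 1/q * (x ^ (1/q - 1) * g (x^r))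
    rw [smul_eq_mul, ← hxx, h2r]; ring
  -- integrability facts
  have hcx : ContinuousOn (fun x : ℝ => x ^ (1/q - 1)) (Set.uIcc (0:ℝ) 1) :=
    ContinuousOn.rpow_const continuousOn_id (fun x _ => Or.inr (by linarith))
  have hcr : ContinuousOn (fun x : ℝ => x ^ r) (Set.uIcc (0:ℝ) 1) :=
    ContinuousOn.rpow_const continuousOn_id (fun x _ => Or.inr (by linarith))
  have hint_a : IntervalIntegrable (fun x : ℝ => x ^ (1/q - 1) * g (x^r))
      MeasureTheory.volume 0 1 :=
    (hcx.mul (hgc.comp_continuousOn hcr)).intervalIntegrable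
  have hint_b : IntervalIntegrable (fun x : ℝ => x ^ (1/q - 1) * g x)
      MeasureTheory.volume 0 1 :=
    (hcx.mul hgc.continuousOn).intervalIntegrable
  -- step 3 : monotone comparison
  have hmono : (∫ x in (0:ℝ)..1, x ^ (1/q - 1) * g (x^r))
      ≤ ∫ x in (0:ℝ)..1, x ^ (1/q - 1) * g x := by
    apply intervalIntegral.integral_mono_on (by norm_num) hint_a hint_b
    intro x hx
    apply mul_le_mul_of_nonneg_left _ (Real.rpow_nonneg hx.1 _)
    apply hgmono
    rcases eq_or_lt_of_le hx.1 with h0 | h0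
    · simp [← h0, Real.zero_rpow (by positivity : r ≠ 0)]
    · calc x ^ r ≤ x ^ (1:ℝ) := Real.rpow_le_rpow_of_exponent_ge h0 hx.2 hr1
        _ = x := Real.rpow_one x
  -- step 4 : compute J = ∫ 2u g u
  have hs_half : ε ^ ((1:ℝ)/2) = s := by rw [hsdef, Real.sqrt_eq_rpow]
  have h32 : ε ^ ((3:ℝ)/2) = s^3 := by
    have : ((3:ℝ)/2) = (1/2) * (3:ℕ) := by norm_num
    rw [this, Real.rpow_mul hε0.le, hs_half, Real.rpow_natCast]
  have intA : IntervalIntegrable (fun u : ℝ => 2*u*g u) MeasureTheory.volume 0 (1-ε) :=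
    ((continuous_const.mul continuous_id).mul hgc).intervalIntegrable _ _
  have intB : IntervalIntegrable (fun u : ℝ => 2*u*g u) MeasureTheory.volume (1-ε) 1 :=
    ((continuous_const.mul continuous_id).mul hgc).intervalIntegrable _ _
  have hJ : (∫ u in (0:ℝ)..1, 2*u*g u) = 8/3 - 2*s + s^3/3 := by
    rw [← intervalIntegral.integral_add_adjacent_intervals intA intB]
    have h1 : (∫ u in (0:ℝ)..(1-ε), 2*u*g u)
        = ∫ u in (0:ℝ)..(1-ε), (2*(1-u) ^ (-(1:ℝ)/2) - 2*(1-u) ^ ((1:ℝ)/2)) := by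
      apply intervalIntegral.integral_congr
      intro u hu
      rw [Set.uIcc_of_le (by linarith)] at hu
      have h1u : ε ≤ 1 - u := by linarith [hu.2]
      have h1u0 : 0 < 1 - u := lt_of_lt_of_le hε0 h1u
      have hfac : (1-u) ^ ((1:ℝ)/2) = (1-u) * (1-u) ^ (-(1:ℝ)/2) := by
        rw [← Real.rpow_one_add' h1u0.le (by norm_num : (1:ℝ) + (-(1:ℝ)/2) ≠ 0)]
        norm_num
      rw [hgdef]
      simp only [max_eq_left h1u]
      rw [hfac]; ring
    have h2 : (∫ u in (0:ℝ)..(1-ε), (2*(1-u) ^ (-(1:ℝ)/2) - 2*(1-u) ^ ((1:ℝ)/2)))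
        = (-4*ε ^ ((1:ℝ)/2) + (4/3)*ε ^ ((3:ℝ)/2)) - (-4 + 4/3) := by
      have hd : ∀ u ∈ Set.uIcc (0:ℝ) (1-ε),
          HasDerivAt (fun u : ℝ => -4*(1-u) ^ ((1:ℝ)/2) + (4/3)*(1-u) ^ ((3:ℝ)/2))
            (2*(1-u) ^ (-(1:ℝ)/2) - 2*(1-u) ^ ((1:ℝ)/2)) u := by
        intro u hu
        rw [Set.uIcc_of_le (by linarith)] at hu
        have h1u0 : 0 < 1 - u := by
          have := hu.2; linarith
        have hbase : HasDerivAt (fun u : ℝ => 1 - u) (-1) u := by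
          simpa using (hasDerivAt_id u).const_sub 1
        have hA : HasDerivAt (fun u : ℝ => (1-u) ^ ((1:ℝ)/2))
            ((-1) * ((1:ℝ)/2) * (1-u) ^ ((1:ℝ)/2 - 1)) u :=
          hbase.rpow_const (Or.inl h1u0.ne')
        have hB : HasDerivAt (fun u : ℝ => (1-u) ^ ((3:ℝ)/2))
            ((-1) * ((3:ℝ)/2) * (1-u) ^ ((3:ℝ)/2 - 1)) u :=
          hbase.rpow_const (Or.inl h1u0.ne')
        have h := (hA.const_mul (-4)).add (hB.const_mul (4/3))
        convert h using 1
        case e'_4 => rfl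
        case e'_5 => rfl
        case e'_8 => rfl
        have e1 : (1:ℝ)/2 - 1 = -(1:ℝ)/2 := by norm_num
        have e2 : (3:ℝ)/2 - 1 = (1:ℝ)/2 := by norm_num
        rw [e1, e2]; ring
      rw [intervalIntegral.integral_eq_sub_of_hasDerivAt hd ?_]
      · have : (1:ℝ) - (1 - ε) = ε := by ring
        simp only [this, sub_zero, sub_self]
        norm_num
      · apply ContinuousOn.intervalIntegrable
        apply ContinuousOn.sub
        · apply ContinuousOn.mul continuousOn_const
          apply ContinuousOn.rpow_const (by fun_prop : ContinuousOn (fun u : ℝ => 1 - u) _)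
          intro u hu
          rw [Set.uIcc_of_le (by linarith)] at hu
          left
          have hu2 := hu.2
          have : 0 < 1 - u := by linarith
          exact this.ne'
        · apply ContinuousOn.mul continuousOn_const
          apply ContinuousOn.rpow_const (by fun_prop : ContinuousOn (fun u : ℝ => 1 - u) _)
          intro u _; right; norm_num
    have h3 : (∫ u in (1-ε)..1, 2*u*g u) = 2*s - s^3 := by
      have hcg : ∀ u ∈ Set.uIcc (1-ε) (1:ℝ), 2*u*g u = (ε ^ (-(1:ℝ)/2)) * (2*u) := by
        intro u hu
        rw [Set.uIcc_of_le (by linarith)] at hu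
        have : 1 - u ≤ ε := by linarith [hu.1]
        rw [hgdef]
        simp only [max_eq_right this]
        ring
      rw [intervalIntegral.integral_congr hcg, intervalIntegral.integral_const_mul]
      have hid : (∫ u in (1-ε)..1, 2*u) = 1 - (1-ε)^2 := by
        have : (∫ u in (1-ε)..1, 2*u) = 2 * ∫ u in (1-ε)..1, u := by
          rw [← intervalIntegral.integral_const_mul]
        rw [this, integral_id]; ring
      rw [hid]
      have hneg : ε ^ (-(1:ℝ)/2) = s⁻¹ := by
        rw [(by norm_num : -(1:ℝ)/2 = -((1:ℝ)/2)), Real.rpow_neg hε0.le, hs_half]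
      rw [hneg, ← hsq]
      field_simp
      ring
    rw [h1, h2, h3, hs_half, h32]
    ring
  -- combine
  have hkey : 8/3 - 2*s + s^3/3 ≤ (1/q) * ∫ x in (0:ℝ)..1, x ^ (1/q - 1) * g x := by
    rw [← hJ, ← hsub, hint2]
    exact mul_le_mul_of_nonneg_left hmono (by positivity)
  have hI : q * (8/3 - 2*s + s^3/3) ≤ ∫ x in (0:ℝ)..1, x ^ (1/q - 1) * g x := by
    have h := mul_le_mul_of_nonneg_left hkey hq0.le
    rwa [← mul_assoc, mul_one_div_cancel hq0.ne', one_mul] at h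
  have hfin : (0:ℝ) ≤ 7/15 - s + s^3/3 := by
    nlinarith [mul_nonneg (by linarith : (0:ℝ) ≤ 1/2 - s)
      (by nlinarith : (0:ℝ) ≤ 3 - (s^2 + s/2 + 1/4)), sq_nonneg s]
  rw [ge_iff_le, deltaEps, hcong]
  nlinarith [hI, mul_nonneg hq0.le hfin]
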